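/- Let δ > 0. The mean K(L) = Avg(S(L, δ)) is Hausdorff-continuous on nonempty compact subsets of ℝ: if (H_n) is a sequence of nonempty compact subsets of ℝ and H is a nonempty compact subset of ℝ such that the Hausdorff distance d(H_n, H) → 0, then Avg(S(H_n, δ)) → Avg(S(H, δ)). -/

import Mathlib

open MeasureTheory Filter

/-- The mean `Avg` by Lebesgue measure. -/
noncomputable def avg (H : Set ℝ) : ℝ := (∫ x in H, x) / (volume H).toReal

open Metric in
lemma mem_cthickening_iff_infDist_le' {X : Type*} [PseudoMetricSpace X] {s : Set X}
    (hs : s.Nonempty) {δ : ℝ} (hδ : 0 ≤ δ) {x : X} :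
    x ∈ cthickening δ s ↔ infDist x s ≤ δ := by
  rw [mem_cthickening_iff, ← ENNReal.ofReal_toReal (infEdist_ne_top hs),
    ENNReal.ofReal_le_ofReal_iff hδ]
  rfl

/-- A set in ℝ in which any two points within distance `δ` coincide is countable. -/
lemma countable_of_separated {s : Set ℝ} {δ : ℝ} (hδ : 0 < δ)
    (h : ∀ x ∈ s, ∀ y ∈ s, |x - y| < δ → x = y) : s.Countable := by
  rw [Set.countable_iff_exists_injOn]
  refine ⟨fun x => Encodable.encode ⌊x / δ⌋, fun x hx y hy hxy => ?_⟩
  have hfl : ⌊x / δ⌋ = ⌊y / δ⌋ := Encodable.encode_injective hxy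
  apply h x hx y hy
  have h1 : (⌊x / δ⌋ : ℝ) ≤ x / δ := Int.floor_le _
  have h2 : x / δ < ⌊x / δ⌋ + 1 := Int.lt_floor_add_one _
  have h3 : (⌊x / δ⌋ : ℝ) ≤ y / δ := by rw [hfl]; exact Int.floor_le _
  have h4 : y / δ < ⌊x / δ⌋ + 1 := by rw [hfl]; exact Int.lt_floor_add_one _
  have hd : |x / δ - y / δ| < 1 := abs_sub_lt_iff.2 ⟨by linarith, by linarith⟩
  have hxy' : x / δ - y / δ = (x - y) / δ := by ring
  rw [hxy', abs_div, abs_of_pos hδ, div_lt_one hδ] at hd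
  exact hd

open Metric in
/-- The level set of `infDist · H` at a positive level is countable, for compact `H`. -/
lemma levelSet_countable {H : Set ℝ} (hc : IsCompact H) (hne : H.Nonempty) {δ : ℝ}
    (hδ : 0 < δ) : {x : ℝ | infDist x H = δ}.Countable := by
  have hsub : {x : ℝ | infDist x H = δ} ⊆
      {x : ℝ | x - δ ∈ H ∧ infDist x H = δ} ∪ {x : ℝ | x + δ ∈ H ∧ infDist x H = δ} := by
    intro x hx
    obtain ⟨y, hyH, hy⟩ := hc.exists_infDist_eq_dist hne x
    have habs : |x - y| = δ := by rw [← Real.dist_eq, ← hy]; exact hx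
    rcases (abs_eq hδ.le).1 habs with h | h
    · exact Or.inl ⟨by have : x - δ = y := by linarith
                       rw [this]; exact hyH, hx⟩
    · exact Or.inr ⟨by have : x + δ = y := by linarith
                       rw [this]; exact hyH, hx⟩
  refine Set.Countable.mono hsub (Set.Countable.union ?_ ?_)
  · refine countable_of_separated hδ ?_
    rintro x ⟨hxH, hxd⟩ y ⟨hyH, hyd⟩ hlt
    by_contra hne'
    rcases lt_or_gt_of_ne hne' with hxy | hxy
    · have h1 : infDist x H ≤ dist x (y - δ) := infDist_le_dist_of_mem hyH
      have h2 : dist x (y - δ) = |x - y + δ| := by rw [Real.dist_eq]; ring_nf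
      rw [abs_sub_lt_iff] at hlt
      have : |x - y + δ| < δ := abs_lt.2 ⟨by linarith, by linarith⟩
      rw [h2] at h1; linarith [hxd ▸ h1]
    · have h1 : infDist y H ≤ dist y (x - δ) := infDist_le_dist_of_mem hxH
      have h2 : dist y (x - δ) = |y - x + δ| := by rw [Real.dist_eq]; ring_nf
      rw [abs_sub_lt_iff] at hlt
      have : |y - x + δ| < δ := abs_lt.2 ⟨by linarith, by linarith⟩
      rw [h2] at h1; linarith [hyd ▸ h1]
  · refine countable_of_separated hδ ?_
    rintro x ⟨hxH, hxd⟩ y ⟨hyH, hyd⟩ hlt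
    by_contra hne'
    rcases lt_or_gt_of_ne hne' with hxy | hxy
    · have h1 : infDist y H ≤ dist y (x + δ) := infDist_le_dist_of_mem hxH
      have h2 : dist y (x + δ) = |y - x - δ| := by rw [Real.dist_eq]; ring_nf
      rw [abs_sub_lt_iff] at hlt
      have : |y - x - δ| < δ := abs_lt.2 ⟨by linarith, by linarith⟩
      rw [h2] at h1; linarith [hyd ▸ h1]
    · have h1 : infDist x H ≤ dist x (y + δ) := infDist_le_dist_of_mem hyH
      have h2 : dist x (y + δ) = |x - y - δ| := by rw [Real.dist_eq]; ring_nf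
      rw [abs_sub_lt_iff] at hlt
      have : |x - y - δ| < δ := abs_lt.2 ⟨by linarith, by linarith⟩
      rw [h2] at h1; linarith [hxd ▸ h1]

open Metric in
lemma volume_cthickening_eq {H : Set ℝ} (hc : IsCompact H) (hne : H.Nonempty) {δ : ℝ}
    (hδ : 0 < δ) : volume (cthickening δ H) = volume (thickening δ H) := by
  refine le_antisymm ?_ (measure_mono (thickening_subset_cthickening δ H))
  have hsub : cthickening δ H ⊆ thickening δ H ∪ {x | infDist x H = δ} := by
    intro x hx
    by_cases hx' : x ∈ thickening δ H
    · exact Or.inl hx'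
    · refine Or.inr (le_antisymm ((mem_cthickening_iff_infDist_le' hne hδ.le).1 hx) ?_)
      exact not_lt.1 (fun hlt => hx' ((mem_thickening_iff_infDist_lt hne).2 hlt))
  calc volume (cthickening δ H) ≤ volume (thickening δ H) + volume {x | infDist x H = δ} :=
        le_trans (measure_mono hsub) (measure_union_le _ _)
    _ = volume (thickening δ H) := by
        rw [(levelSet_countable hc hne hδ).measure_zero, add_zero]

lemma tendsto_of_eventually_abs_le {f : ℕ → ℝ} {L : ℝ} {c : ℕ → ℝ}
    (hc : Tendsto c atTop (nhds 0)) (h : ∀ k, ∀ᶠ n in atTop, |f n - L| ≤ c k) :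
    Tendsto f atTop (nhds L) := by
  rw [Metric.tendsto_atTop]
  intro ε hε
  obtain ⟨k, hk⟩ := (hc.eventually_lt_const hε).exists
  obtain ⟨N, hN⟩ := eventually_atTop.1 (h k)
  exact ⟨N, fun n hn => by rw [Real.dist_eq]; exact lt_of_le_of_lt (hN n hn) hk⟩

open Metric in
theorem avg_thickening_hausdorff_continuous (δ : ℝ) (hδ : 0 < δ)
    (Hn : ℕ → Set ℝ) (H : Set ℝ)
    (hne : ∀ n, (Hn n).Nonempty) (hcomp : ∀ n, IsCompact (Hn n))
    (hHne : H.Nonempty) (hHcomp : IsCompact H)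
    (hconv : Tendsto (fun n => Metric.hausdorffDist (Hn n) H) atTop (nhds 0)) :
    Tendsto (fun n => avg (Metric.thickening δ (Hn n))) atTop
      (nhds (avg (Metric.thickening δ H))) := by
  set U : Set ℝ := thickening δ H with hU
  have hUopen : IsOpen U := isOpen_thickening
  have hUne : U.Nonempty := hHne.mono (self_subset_thickening hδ H)
  -- a big bounded set W containing everything relevant, and a bound M on |x| there
  set W : Set ℝ := thickening (δ + 1) H with hW
  have hWb : Bornology.IsBounded W := hHcomp.isBounded.thickening
  obtain ⟨M, hM⟩ := hWb.exists_norm_le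
  have hWfin : volume W ≠ ⊤ := hWb.measure_lt_top.ne
  have hUW : U ⊆ W := thickening_mono (by linarith) H
  have hMnonneg : 0 ≤ M := by
    obtain ⟨w, hw⟩ := hUne
    exact le_trans (norm_nonneg w) (hM w (hUW hw))
  have hIntW : IntegrableOn (fun x : ℝ => x) W volume := by
    refine Measure.integrableOn_of_bounded (M := M) hWfin measurable_id.aestronglyMeasurable ?_
    exact (ae_restrict_iff' isOpen_thickening.measurableSet).2 (ae_of_all _ fun x hx => hM x hx)
  -- the shrinking radius sequence
  set e : ℕ → ℝ := fun k => 1 / (k + 1) with he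
  have he_pos : ∀ k, 0 < e k := fun k => by positivity
  have he_le1 : ∀ k, e k ≤ 1 := fun k => by
    rw [he]; rw [div_le_one (by positivity)]
    simp
  have he_anti : ∀ i j, i ≤ j → e j ≤ e i := fun i j hij =>
    one_div_le_one_div_of_le (by positivity) (by exact_mod_cast by simpa using hij)
  have he_tendsto : Tendsto e atTop (nhds 0) := tendsto_one_div_add_atTop_nhds_zero_nat
  set A : ℕ → Set ℝ := fun k => thickening (δ + e k) H with hA
  set B : ℕ → Set ℝ := fun k => thickening (δ - e k) H with hB
  have hAW : ∀ k, A k ⊆ W := fun k => thickening_mono (by linarith [he_le1 k]) H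
  have hBU : ∀ k, B k ⊆ U := fun k => thickening_mono (by linarith [he_pos k]) H
  have hUA : ∀ k, U ⊆ A k := fun k => thickening_mono (by linarith [he_pos k]) H
  have hBA : ∀ k, B k ⊆ A k := fun k => (hBU k).trans (hUA k)
  have hAfin : ∀ k, volume (A k) ≠ ⊤ := fun k =>
    ((measure_mono (hAW k)).trans_lt hWfin.lt_top).ne
  have hUfin : volume U ≠ ⊤ := ((measure_mono hUW).trans_lt hWfin.lt_top).ne
  have hBfin : ∀ k, volume (B k) ≠ ⊤ := fun k =>
    ((measure_mono (hBU k)).trans_lt hUfin.lt_top).ne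
  -- volume of A k tends to volume U
  have hAe : Tendsto (fun k => volume (A k)) atTop (nhds (volume U)) := by
    have hinter : ⋂ k, A k = cthickening δ H := by
      ext x
      simp only [Set.mem_iInter, hA]
      rw [mem_cthickening_iff_infDist_le' hHne hδ.le]
      constructor
      · intro h
        by_contra hlt
        push_neg at hlt
        obtain ⟨k, hk⟩ := exists_nat_one_div_lt (sub_pos.2 hlt)
        have := (mem_thickening_iff_infDist_lt hHne).1 (h k)
        have hek : e k = 1 / (k + 1) := rfl
        rw [hek] at this
        linarith
      · intro h k
        exact (mem_thickening_iff_infDist_lt hHne).2 (lt_of_le_of_lt h (by linarith [he_pos k]))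
    have hanti : Antitone A := fun i j hij => thickening_mono (by linarith [he_anti i j hij]) H
    have h1 := tendsto_measure_iInter_atTop
      (fun k => (isOpen_thickening.measurableSet :
        MeasurableSet (A k)).nullMeasurableSet) hanti ⟨0, hAfin 0⟩
    rw [hinter, volume_cthickening_eq hHcomp hHne hδ] at h1
    exact h1
  -- volume of B k tends to volume U
  have hBe : Tendsto (fun k => volume (B k)) atTop (nhds (volume U)) := by
    have hunion : ⋃ k, B k = U := by
      ext x
      simp only [Set.mem_iUnion, hB, hU]
      constructor
      · rintro ⟨k, hk⟩
        exact (mem_thickening_iff_infDist_lt hHne).2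
          (lt_of_lt_of_le ((mem_thickening_iff_infDist_lt hHne).1 hk) (by linarith [he_pos k]))
      · intro h
        obtain ⟨k, hk⟩ :=
          exists_nat_one_div_lt (sub_pos.2 ((mem_thickening_iff_infDist_lt hHne).1 h))
        refine ⟨k, (mem_thickening_iff_infDist_lt hHne).2 ?_⟩
        have hek : e k = 1 / (k + 1) := rfl
        rw [hek]; linarith
    have hmono : Monotone B := fun i j hij => thickening_mono (by linarith [he_anti i j hij]) H
    have h1 := tendsto_measure_iUnion_atTop (μ := volume) hmono
    rw [hunion] at h1
    exact h1
  -- real-valued versions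
  set V : ℝ := (volume U).toReal with hV
  have hVpos : 0 < V := ENNReal.toReal_pos (hUopen.measure_pos volume hUne).ne' hUfin
  set c : ℕ → ℝ := fun k => (volume (A k)).toReal - (volume (B k)).toReal with hc
  have hc_tendsto : Tendsto c atTop (nhds 0) := by
    have h1 : Tendsto (fun k => (volume (A k)).toReal) atTop (nhds V) :=
      (ENNReal.tendsto_toReal hUfin).comp hAe
    have h2 : Tendsto (fun k => (volume (B k)).toReal) atTop (nhds V) :=
      (ENNReal.tendsto_toReal hUfin).comp hBe
    simpa using h1.sub h2
  -- eventual sandwich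
  have hEd : ∀ n, EMetric.hausdorffEdist (Hn n) H ≠ ⊤ := fun n =>
    hausdorffEdist_ne_top_of_nonempty_of_bounded (hne n) hHne (hcomp n).isBounded
      hHcomp.isBounded
  have hsand : ∀ k, ∀ᶠ n in atTop,
      B k ⊆ thickening δ (Hn n) ∧ thickening δ (Hn n) ⊆ A k := by
    intro k
    filter_upwards [hconv.eventually_lt_const (he_pos k)] with n hd
    constructor
    · intro x hx
      have h1 : infDist x H < δ - e k := (mem_thickening_iff_infDist_lt hHne).1 hx
      have h2 : infDist x (Hn n) ≤ infDist x H + hausdorffDist H (Hn n) :=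
        infDist_le_infDist_add_hausdorffDist (by rw [EMetric.hausdorffEdist_comm]; exact hEd n)
      rw [hausdorffDist_comm] at h2
      exact (mem_thickening_iff_infDist_lt (hne n)).2 (by linarith)
    · intro x hx
      have h1 : infDist x (Hn n) < δ := (mem_thickening_iff_infDist_lt (hne n)).1 hx
      have h2 : infDist x H ≤ infDist x (Hn n) + hausdorffDist (Hn n) H :=
        infDist_le_infDist_add_hausdorffDist (hEd n)
      exact (mem_thickening_iff_infDist_lt hHne).2 (by linarith)
  -- convergence of volumes of the moving thickenings
  have hVol : Tendsto (fun n => (volume (thickening δ (Hn n))).toReal) atTop (nhds V) := by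
    refine tendsto_of_eventually_abs_le hc_tendsto fun k => ?_
    filter_upwards [hsand k] with n hn
    obtain ⟨h1, h2⟩ := hn
    have hfinT : volume (thickening δ (Hn n)) ≠ ⊤ :=
      ((measure_mono h2).trans_lt (hAfin k).lt_top).ne
    have l1 : (volume (B k)).toReal ≤ (volume (thickening δ (Hn n))).toReal :=
      ENNReal.toReal_mono hfinT (measure_mono h1)
    have l2 : (volume (thickening δ (Hn n))).toReal ≤ (volume (A k)).toReal :=
      ENNReal.toReal_mono (hAfin k) (measure_mono h2)
    have l3 : (volume (B k)).toReal ≤ V := ENNReal.toReal_mono hUfin (measure_mono (hBU k))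
    have l4 : V ≤ (volume (A k)).toReal := ENNReal.toReal_mono (hAfin k) (measure_mono (hUA k))
    rw [abs_le]
    constructor <;> simp only [hc] <;> linarith
  -- convergence of the integrals
  set I : ℝ := ∫ x in U, x with hI
  have hInt : Tendsto (fun n => ∫ x in thickening δ (Hn n), x) atTop (nhds I) := by
    have hc2 : Tendsto (fun k => 2 * M * c k) atTop (nhds 0) := by
      simpa using hc_tendsto.const_mul (2 * M)
    refine tendsto_of_eventually_abs_le hc2 fun k => ?_
    filter_upwards [hsand k] with n hn
    obtain ⟨h1, h2⟩ := hn
    have hTsub : thickening δ (Hn n) ⊆ W := h2.trans (hAW k)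
    have hIntT : IntegrableOn (fun x : ℝ => x) (thickening δ (Hn n)) volume :=
      hIntW.mono_set hTsub
    have hIntU : IntegrableOn (fun x : ℝ => x) U volume := hIntW.mono_set hUW
    have hBmeas : MeasurableSet (B k) := isOpen_thickening.measurableSet
    have e1 : ∫ x in thickening δ (Hn n) \ B k, x
        = (∫ x in thickening δ (Hn n), x) - ∫ x in B k, x :=
      integral_diff hBmeas hIntT h1
    have e2 : ∫ x in U \ B k, x = I - ∫ x in B k, x :=
      integral_diff hBmeas hIntU (hBU k)
    have hdiffvol : (volume (A k \ B k)).toReal = c k := by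
      rw [measure_diff (hBA k) hBmeas.nullMeasurableSet (hBfin k),
        ENNReal.toReal_sub_of_le (measure_mono (hBA k)) (hAfin k)]
    have key : ∀ s : Set ℝ, s ⊆ A k \ B k → |∫ x in s, x| ≤ M * c k := by
      intro s hs
      have hsW : s ⊆ W := fun x hx => hAW k (hs hx).1
      have hsfin : volume s < ⊤ := (measure_mono hsW).trans_lt hWfin.lt_top
      have hb : |∫ x in s, x| ≤ M * (volume s).toReal := by
        have := norm_setIntegral_le_of_norm_le_const (f := fun x : ℝ => x) (μ := volume)
          hsfin (fun x hx => hM x (hsW hx))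
        simpa [Real.norm_eq_abs, measureReal_def] using this
      refine hb.trans ?_
      have : (volume s).toReal ≤ (volume (A k \ B k)).toReal :=
        ENNReal.toReal_mono (((measure_mono (Set.diff_subset)).trans_lt
          (hAfin k).lt_top).ne) (measure_mono hs)
      rw [← hdiffvol]
      exact mul_le_mul_of_nonneg_left this hMnonneg
    have k1 : |∫ x in thickening δ (Hn n) \ B k, x| ≤ M * c k :=
      key _ (fun x hx => ⟨h2 hx.1, hx.2⟩)
    have k2 : |∫ x in U \ B k, x| ≤ M * c k :=
      key _ (fun x hx => ⟨hUA k hx.1, hx.2⟩)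
    have hrw : (∫ x in thickening δ (Hn n), x) - I
        = (∫ x in thickening δ (Hn n) \ B k, x) - ∫ x in U \ B k, x := by
      rw [e1, e2]; ring
    calc |(∫ x in thickening δ (Hn n), x) - I|
        = |(∫ x in thickening δ (Hn n) \ B k, x) - ∫ x in U \ B k, x| := by rw [hrw]
      _ ≤ |∫ x in thickening δ (Hn n) \ B k, x| + |∫ x in U \ B k, x| := abs_sub _ _
      _ ≤ M * c k + M * c k := add_le_add k1 k2
      _ = 2 * M * c k := by ring
  -- conclude
  have : Tendsto (fun n => (∫ x in thickening δ (Hn n), x)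
      / (volume (thickening δ (Hn n))).toReal) atTop (nhds (I / V)) :=
    hInt.div hVol hVpos.ne'
  simpa [avg, hI, hV, hU] using this
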